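/- Let s ↦ (x,y,t,θ,v,a,p_x,p_y,p_t,p_θ,p_v,p_a)(s) be a differentiable solution of the 2D Hamiltonian geodesic system (H2). Then p_x, p_y and p_t are constant functions, and the function s ↦ ψ(s)² + p_θ(s)² + p_a(s)², where ψ(s) = v(s)·(cosθ(s)·p_x + sinθ(s)·p_y) + a(s)·p_v(s) + p_t, is constant. -/

import Mathlib

/-- Along any differentiable solution of the 2D Hamiltonian geodesic
system (H2), the momenta `p_x, p_y, p_t` are constant and the quantity
`ψ² + p_θ² + p_a²`, with `ψ = v(cosθ·p_x + sinθ·p_y) + a·p_v + p_t`, is constant. -/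
theorem stmt_9
    (x y t θ v a px py pt pθ pv pa : ℝ → ℝ)
    (ψ : ℝ → ℝ)
    (hψ : ∀ s, ψ s = v s * (Real.cos (θ s) * px s + Real.sin (θ s) * py s)
        + a s * pv s + pt s)
    (hpx : ∀ s, HasDerivAt px 0 s)
    (hpy : ∀ s, HasDerivAt py 0 s)
    (hpt : ∀ s, HasDerivAt pt 0 s)
    (hpv : ∀ s, HasDerivAt pv
      (-(Real.cos (θ s) * px s + Real.sin (θ s) * py s) * ψ s) s)
    (hpθ : ∀ s, HasDerivAt pθ
      (v s * (Real.sin (θ s) * px s - Real.cos (θ s) * py s) * ψ s) s)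
    (hpa : ∀ s, HasDerivAt pa (-(pv s) * ψ s) s)
    (hx : ∀ s, HasDerivAt x (v s * Real.cos (θ s) * ψ s) s)
    (hy : ∀ s, HasDerivAt y (v s * Real.sin (θ s) * ψ s) s)
    (ht : ∀ s, HasDerivAt t (ψ s) s)
    (hv : ∀ s, HasDerivAt v (a s * ψ s) s)
    (hθ : ∀ s, HasDerivAt θ (pθ s) s)
    (ha : ∀ s, HasDerivAt a (pa s) s) :
    (∀ s, px s = px 0) ∧ (∀ s, py s = py 0) ∧ (∀ s, pt s = pt 0) ∧
    (∀ s, ψ s ^ 2 + pθ s ^ 2 + pa s ^ 2 = ψ 0 ^ 2 + pθ 0 ^ 2 + pa 0 ^ 2) := by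
  have const_of : ∀ (f : ℝ → ℝ), (∀ s, HasDerivAt f 0 s) → ∀ s, f s = f 0 := by
    intro f hf s
    exact is_const_of_deriv_eq_zero (fun u => (hf u).differentiableAt)
      (fun u => (hf u).deriv) s 0
  have hψeq : ψ = fun s => v s * (Real.cos (θ s) * px s + Real.sin (θ s) * py s)
      + a s * pv s + pt s := funext hψ
  have hψ' : ∀ s, HasDerivAt ψ
      (-(v s * pθ s * (Real.sin (θ s) * px s - Real.cos (θ s) * py s))
        + pa s * pv s) s := by
    intro s
    have hcos : HasDerivAt (fun u => Real.cos (θ u)) (-Real.sin (θ s) * pθ s) s :=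
      (Real.hasDerivAt_cos (θ s)).comp s (hθ s)
    have hsin : HasDerivAt (fun u => Real.sin (θ u)) (Real.cos (θ s) * pθ s) s :=
      (Real.hasDerivAt_sin (θ s)).comp s (hθ s)
    rw [hψeq]
    refine (((hv s).fun_mul ((hcos.fun_mul (hpx s)).fun_add (hsin.fun_mul (hpy s)))).fun_add
      ((ha s).fun_mul (hpv s))).fun_add (hpt s) |>.congr_deriv ?_
    · rw [hψ s]; ring
  refine ⟨const_of px (fun s => hpx s), const_of py (fun s => hpy s),
    const_of pt (fun s => hpt s), ?_⟩
  have hE : ∀ s, HasDerivAt (fun u => ψ u ^ 2 + pθ u ^ 2 + pa u ^ 2) 0 s := by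
    intro s
    have := (((hψ' s).fun_pow 2).fun_add ((hpθ s).fun_pow 2)).fun_add ((hpa s).fun_pow 2)
    refine this.congr_deriv ?_
    ring
  exact const_of _ hE
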